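/- Assume the rotation map σ has no fixed points. Let Φ be a unit vector in ℂ^(V × {0,…,d−1}) satisfying W Φ = e^{iφ} Φ for some real φ with 0 < φ < π. Then Σ_{u∈V} |⟨ψ_u, Φ⟩|² = 1/2. -/

import Mathlib

open scoped InnerProductSpace
open Complex

/-- The coin state `ψ_u = (1/√d) Σ_g e_{(u,g)}`. -/
noncomputable def psiState (V : Type*) [Fintype V] [DecidableEq V] (d : ℕ) (u : V) :
    EuclideanSpace ℂ (V × Fin d) :=
  WithLp.toLp 2 (fun x : V × Fin d => if x.1 = u then ((1 / Real.sqrt d : ℝ) : ℂ) else 0)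

/-- The coin operator `C = 2 Σ_u |ψ_u⟩⟨ψ_u| − I` applied to a vector. -/
noncomputable def coinOp {V : Type*} [Fintype V] [DecidableEq V] {d : ℕ}
    (Φ : EuclideanSpace ℂ (V × Fin d)) : EuclideanSpace ℂ (V × Fin d) :=
  (2 : ℂ) • (∑ u : V, ⟪psiState V d u, Φ⟫_ℂ • psiState V d u) - Φ

/-- The flip-flop walk operator `W = S C`, where `S e_x = e_{σ(x)}`. -/
noncomputable def walkOp {V : Type*} [Fintype V] [DecidableEq V] {d : ℕ}
    (σ : V × Fin d → V × Fin d) (Φ : EuclideanSpace ℂ (V × Fin d)) :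
    EuclideanSpace ℂ (V × Fin d) :=
  WithLp.toLp 2 (fun x => coinOp Φ (σ x))

/-- The normalized adjacency matrix entry `A(u,v) = |{g : (σ(u,g)).1 = v}| / d`. -/
noncomputable def adjEntry {V : Type*} [Fintype V] [DecidableEq V] {d : ℕ}
    (σ : V × Fin d → V × Fin d) (u v : V) : ℝ :=
  (Finset.univ.filter (fun g : Fin d => (σ (u, g)).1 = v)).card / d

/-- If `σ` has no fixed points and `Φ` is a unit vector with `W Φ = e^{iφ} Φ`,
`0 < φ < π`, then `Σ_u |⟨ψ_u, Φ⟩|² = 1/2`. -/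
theorem walk_eigenvector_projection_half
    {V : Type*} [Fintype V] [DecidableEq V] [Nonempty V] {d : ℕ} (hd : 1 ≤ d)
    (σ : V × Fin d → V × Fin d) (hσ : ∀ x, σ (σ x) = x) (hfix : ∀ x, σ x ≠ x)
    (Φ : EuclideanSpace ℂ (V × Fin d)) (hΦ : ‖Φ‖ = 1)
    (φ : ℝ) (hφ0 : 0 < φ) (hφπ : φ < Real.pi)
    (hW : walkOp σ Φ = Complex.exp (φ * Complex.I) • Φ) :
    ∑ u : V, ‖⟪psiState V d u, Φ⟫_ℂ‖ ^ 2 = 1 / 2 := by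
  set s : V → ℂ := fun u => ⟪psiState V d u, Φ⟫_ℂ with hs
  have hW' : ∀ x, coinOp Φ x = Complex.exp (φ * Complex.I) * Φ (σ x) := by
    intro x
    have h := congrArg (fun v => v (σ x)) hW
    have h1 : walkOp σ Φ (σ x) = coinOp Φ x := by simp only [walkOp, PiLp.toLp_apply, hσ]
    have h2 : (Complex.exp (φ * Complex.I) • Φ) (σ x)
        = Complex.exp (φ * Complex.I) * Φ (σ x) := by simp
    rw [h1, h2] at h
    exact h
  set T : ℂ := ∑ x : V × Fin d, (starRingEnd ℂ) (Φ x) * Φ (σ x) with hT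
  have hTim : T.im = 0 := by
    rw [← Complex.conj_eq_iff_im]
    rw [hT, map_sum]
    refine Fintype.sum_equiv (Function.Involutive.toPerm σ (show Function.Involutive σ from hσ)) _ _ ?_
    intro x
    simp only [Function.Involutive.coe_toPerm, map_mul, Complex.conj_conj]
    rw [hσ]
    ring
  set A : ℂ := ⟪Φ, coinOp Φ⟫_ℂ with hA
  have hA1 : A = 2 * (↑(∑ u : V, ‖s u‖ ^ 2) : ℂ) - 1 := by
    rw [hA, coinOp, inner_sub_right, inner_smul_right, inner_sum]
    have hΦΦ : ⟪Φ, Φ⟫_ℂ = 1 := by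
      rw [inner_self_eq_norm_sq_to_K, hΦ]; norm_num
    have hterm : ∀ u : V, ⟪Φ, (⟪psiState V d u, Φ⟫_ℂ • psiState V d u)⟫_ℂ
        = (↑(‖s u‖ ^ 2) : ℂ) := by
      intro u
      rw [inner_smul_right, ← inner_conj_symm Φ (psiState V d u), Complex.mul_conj]
      simp [hs, Complex.normSq_eq_norm_sq]
    rw [Finset.sum_congr rfl (fun u _ => hterm u), hΦΦ]
    push_cast
    ring
  have hA2 : A = Complex.exp (φ * Complex.I) * T := by
    rw [hA, hT, PiLp.inner_apply, Finset.mul_sum]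
    refine Finset.sum_congr rfl fun x _ => ?_
    rw [RCLike.inner_apply, hW']
    ring
  have hAim : A.im = 0 := by
    rw [hA1]; simp [← Complex.ofReal_pow]
  have hsin : Real.sin φ ≠ 0 := ne_of_gt (Real.sin_pos_of_pos_of_lt_pi hφ0 hφπ)
  have hTre : T.re = 0 := by
    have h := hAim
    rw [hA2] at h
    rw [Complex.mul_im, Complex.exp_ofReal_mul_I_re, Complex.exp_ofReal_mul_I_im,
      hTim] at h
    simpa [hsin] using h
  have hT0 : T = 0 := Complex.ext hTre hTim
  have hA0 : A = 0 := by rw [hA2, hT0, mul_zero]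
  rw [hA1] at hA0
  push_cast at hA0
  have hC : ((∑ u : V, ‖s u‖ ^ 2 : ℝ) : ℂ) = ((1 / 2 : ℝ) : ℂ) := by
    push_cast
    linear_combination hA0 / 2
  exact_mod_cast hC
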